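/- Let S and T be monads on the category of sets and let λ : TS ⇒ ST be a natural transformation satisfying either axiom (η+): λ ∘ Tη^S = η^S T, or axiom (η−): λ ∘ η^T S = Sη^T. Let E be the exception monad and, for any Set monad U, let ε^U : EU ⇒ UE be the distributive law determined by ε^U_X(inl(u)) = U(inl_X)(u) for u ∈ UX and ε^U_X(inr(∗)) = η^U_{X+1}(inr_X(∗)). Then the Yang–Baxter equation λE ∘ Tε^S ∘ ε^T S = Sε^T ∘ ε^S T ∘ Eλ holds. -/

import Mathlib

open CategoryTheory

universe u

/-- The distributive law `ε^U : EU ⇒ UE` of a `Set`-monad `U` over the exception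
monad `E` (with `EX = X + 1` rendered as `Option X`): `inl u ↦ U(inl)(u)` and
`inr ∗ ↦ η^U(inr ∗)`. -/
def epsLaw (U : Monad (Type u)) (X : Type u) : Option (U.obj X) → U.obj (Option X) :=
  fun z => z.elim (U.η.app (Option X) none) (fun u => U.map (TypeCat.ofHom fun x : X => some x) u)

/-- Proposition 4.8. If `λ : TS ⇒ ST` satisfies axiom (η+) or
axiom (η−), then the Yang–Baxter equation
`λE ∘ Tε^S ∘ ε^T S = Sε^T ∘ ε^S T ∘ Eλ` holds. -/
theorem yb_exception (S T : Monad (Type u))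
    (l : (S.toFunctor ⋙ T.toFunctor) ⟶ (T.toFunctor ⋙ S.toFunctor))
    (h : (∀ X : Type u, T.map (S.η.app X) ≫ l.app X = S.η.app (T.obj X)) ∨
         (∀ X : Type u, T.η.app (S.obj X) ≫ l.app X = S.map (T.η.app X))) :
    ∀ X : Type u,
      TypeCat.ofHom (epsLaw T (S.obj X)) ≫ T.map (TypeCat.ofHom (epsLaw S X)) ≫ l.app (Option X) =
      TypeCat.ofHom (Option.map (l.app X) :
          Option (T.obj (S.obj X)) → Option (S.obj (T.obj X))) ≫
        TypeCat.ofHom (epsLaw S (T.obj X)) ≫ S.map (TypeCat.ofHom (epsLaw T X)) := by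
  intro X
  ext z
  cases z with
  | some u =>
    show l.app (Option X) (T.map (TypeCat.ofHom (epsLaw S X)) (T.map (TypeCat.ofHom fun s : S.obj X => some s) u)) =
      S.map (TypeCat.ofHom (epsLaw T X)) (S.map (TypeCat.ofHom fun t : T.obj X => some t) (l.app X u))
    rw [← FunctorToTypes.map_comp_apply, ← FunctorToTypes.map_comp_apply]
    have h1 : (TypeCat.ofHom fun s : S.obj X => some s) ≫ TypeCat.ofHom (epsLaw S X) = S.map (TypeCat.ofHom fun x : X => some x) := rfl
    have h2 : (TypeCat.ofHom fun t : T.obj X => some t) ≫ TypeCat.ofHom (epsLaw T X) = T.map (TypeCat.ofHom fun x : X => some x) := rfl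
    rw [h1, h2]
    exact types_congr_hom (l.naturality (TypeCat.ofHom fun x : X => some x)) u
  | none =>
    show l.app (Option X) (T.map (TypeCat.ofHom (epsLaw S X)) (T.η.app (Option (S.obj X)) none)) =
      S.map (TypeCat.ofHom (epsLaw T X)) (S.η.app (Option (T.obj X)) none)
    have e1 : T.map (TypeCat.ofHom (epsLaw S X)) (T.η.app (Option (S.obj X)) none) =
        T.η.app (S.obj (Option X)) (S.η.app (Option X) none) :=
      (types_congr_hom (T.η.naturality (TypeCat.ofHom (epsLaw S X))) none).symm
    have e2 : S.map (TypeCat.ofHom (epsLaw T X)) (S.η.app (Option (T.obj X)) none) =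
        S.η.app (T.obj (Option X)) (T.η.app (Option X) none) :=
      (types_congr_hom (S.η.naturality (TypeCat.ofHom (epsLaw T X))) none).symm
    rw [e1, e2]
    cases h with
    | inl hp =>
      have e3 : T.η.app (S.obj (Option X)) (S.η.app (Option X) none) =
          T.map (S.η.app (Option X)) (T.η.app (Option X) none) :=
        types_congr_hom (T.η.naturality (S.η.app (Option X))) none
      rw [e3]
      exact types_congr_hom (hp (Option X)) (T.η.app (Option X) none)
    | inr hm =>
      have := types_congr_hom (hm (Option X)) (S.η.app (Option X) none)
      simp only [types_comp_apply] at this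
      rw [this]
      exact (types_congr_hom (S.η.naturality (T.η.app (Option X))) none).symm
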